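/- A two-agent epistemic formula φ with common knowledge is satisfiable in the class of S5 Kripke models (all relations equivalence relations) if and only if the formula ρ(φ) = φ ∧ (⋀_{χ∈μ(φ)} χ) ∧ C_{{a,b}}(⋀_{χ∈μ(φ)} χ) is satisfiable in the class of symmetric Kripke models, where μ(φ) consists of all formulas K_i ψ → K_i K_i ψ and K_i ψ → ψ for i ∈ {a,b} and ψ ranging over cl(φ) ∪ {C_G χ : χ ∈ cl(φ), G ⊆ {a,b}, G ≠ ∅}, with cl(φ) the set of subformulas of φ and their negations together with ⊤ and ⊥. -/

import Mathlib

/-- Two-agent epistemic formulas with common knowledge: the agents are `false` (= `a`) and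
`true` (= `b`). -/
inductive FormC (P : Type) where
  | atom : P → FormC P
  | bot : FormC P
  | neg : FormC P → FormC P
  | impl : FormC P → FormC P → FormC P
  | K : Bool → FormC P → FormC P
  | Ck : Finset Bool → FormC P → FormC P

/-- Kripke satisfaction; common knowledge via nonempty paths along `⋃_{i∈G} R i`. -/
def ksat {W P : Type} (R : Bool → W → W → Prop) (V : W → P → Prop) : FormC P → W → Prop
  | .atom p, w => V w p
  | .bot, _ => False
  | .neg φ, w => ¬ ksat R V φ w
  | .impl φ ψ, w => ksat R V φ w → ksat R V ψ w
  | .K i φ, w => ∀ u, R i w u → ksat R V φ u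
  | .Ck G φ, w => ∀ u, Relation.TransGen (fun x y => ∃ i ∈ G, R i x y) w u → ksat R V φ u

/-- The subformulas of a formula. -/
def sub {P : Type} : FormC P → List (FormC P)
  | .atom p => [.atom p]
  | .bot => [.bot]
  | .neg φ => .neg φ :: sub φ
  | .impl φ ψ => .impl φ ψ :: (sub φ ++ sub ψ)
  | .K i φ => .K i φ :: sub φ
  | .Ck G φ => .Ck G φ :: sub φ

/-- The closure `cl(φ)`: subformulas, their negations, `⊤` and `⊥`. -/
def cl {P : Type} (φ : FormC P) : List (FormC P) :=
  sub φ ++ (sub φ).map .neg ++ [.neg .bot, .bot]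

/-- The nonempty subgroups of `{a, b}`. -/
def groupsList : List (Finset Bool) := [{false}, {true}, {false, true}]

/-- `cl(φ)` extended with the formulas `C_G χ` for `χ ∈ cl(φ)` and `∅ ≠ G ⊆ {a,b}`. -/
def clC {P : Type} (φ : FormC P) : List (FormC P) :=
  cl φ ++ groupsList.flatMap (fun G => (cl φ).map (.Ck G))

/-- `μ(φ)`: the formulas `K_i ψ → K_i K_i ψ` and `K_i ψ → ψ` for `i ∈ {a,b}` and
`ψ ∈ cl(φ) ∪ {C_G χ : χ ∈ cl(φ), ∅ ≠ G ⊆ {a,b}}`. -/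
def mu {P : Type} (φ : FormC P) : List (FormC P) :=
  [false, true].flatMap fun i =>
    (clC φ).flatMap fun ψ =>
      [.impl (.K i ψ) (.K i (.K i ψ)), .impl (.K i ψ) ψ]

/-- Conjunction, defined from `¬` and `→`. -/
def andF {P : Type} (φ ψ : FormC P) : FormC P := .neg (.impl φ (.neg ψ))

/-- Conjunction of a list of formulas. -/
def conj {P : Type} (l : List (FormC P)) : FormC P := l.foldr andF (.neg .bot)

/-- `ρ(φ) = φ ∧ (⋀ μ(φ)) ∧ C_{{a,b}} (⋀ μ(φ))`. -/
def rho {P : Type} (φ : FormC P) : FormC P :=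
  andF φ (andF (conj (mu φ)) (.Ck {false, true} (conj (mu φ))))

-- helpers
open Relation

lemma ksat_andF {W P : Type} (R : Bool → W → W → Prop) (V : W → P → Prop)
    (φ ψ : FormC P) (w : W) :
    ksat R V (andF φ ψ) w ↔ ksat R V φ w ∧ ksat R V ψ w := by
  simp only [andF, ksat]; tauto

lemma ksat_conj {W P : Type} (R : Bool → W → W → Prop) (V : W → P → Prop)
    (l : List (FormC P)) (w : W) :
    ksat R V (conj l) w ↔ ∀ χ ∈ l, ksat R V χ w := by
  induction l with
  | nil => simp [conj, ksat]
  | cons a l ih =>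
    rw [show conj (a :: l) = andF a (conj l) from rfl, ksat_andF, ih]
    simp

lemma mem_sub_self {P : Type} (φ : FormC P) : φ ∈ sub φ := by
  cases φ <;> simp [sub]

lemma sub_subset {P : Type} {φ ψ : FormC P} (h : ψ ∈ sub φ) : ∀ χ ∈ sub ψ, χ ∈ sub φ := by
  induction φ with
  | atom p => simp [sub] at h; subst h; exact fun χ hχ => hχ
  | bot => simp [sub] at h; subst h; exact fun χ hχ => hχ
  | neg φ ih =>
    rcases List.mem_cons.mp h with h | h
    · subst h; exact fun χ hχ => hχ
    · exact fun χ hχ => List.mem_cons_of_mem _ (ih h χ hχ)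
  | impl φ1 φ2 ih1 ih2 =>
    rcases List.mem_cons.mp h with h | h
    · subst h; exact fun χ hχ => hχ
    · rcases List.mem_append.mp h with h | h
      · exact fun χ hχ => List.mem_cons_of_mem _ (List.mem_append.mpr (Or.inl (ih1 h χ hχ)))
      · exact fun χ hχ => List.mem_cons_of_mem _ (List.mem_append.mpr (Or.inr (ih2 h χ hχ)))
  | K i φ ih =>
    rcases List.mem_cons.mp h with h | h
    · subst h; exact fun χ hχ => hχ
    · exact fun χ hχ => List.mem_cons_of_mem _ (ih h χ hχ)
  | Ck G φ ih =>
    rcases List.mem_cons.mp h with h | h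
    · subst h; exact fun χ hχ => hχ
    · exact fun χ hχ => List.mem_cons_of_mem _ (ih h χ hχ)

lemma sub_mem_clC {P : Type} {φ ψ : FormC P} (h : ψ ∈ sub φ) : ψ ∈ clC φ := by
  simp [clC, cl]; tauto

lemma self_mem_clC {P : Type} (φ : FormC P) : φ ∈ clC φ := sub_mem_clC (mem_sub_self φ)

lemma clC_aux {P : Type} {φ χ : FormC P}
    (h : χ ∈ sub φ ∨ (∃ a ∈ sub φ, FormC.neg a = χ) ∨ χ = FormC.neg .bot ∨ χ = FormC.bot) :
    χ ∈ clC φ := by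
  have hc : χ ∈ cl φ := by
    rcases h with h | ⟨a, ha, rfl⟩ | rfl | rfl
    · exact List.mem_append.mpr (Or.inl (List.mem_append.mpr (Or.inl h)))
    · exact List.mem_append.mpr (Or.inl (List.mem_append.mpr (Or.inr (List.mem_map.mpr ⟨a, ha, rfl⟩))))
    · simp [cl]
    · simp [cl]
  exact List.mem_append.mpr (Or.inl hc)

lemma clC_neg {P : Type} {φ χ : FormC P} (h : FormC.neg χ ∈ clC φ) : χ ∈ clC φ := by
  simp [clC, cl, groupsList] at h
  rcases h with h | h | h
  · exact clC_aux (Or.inl (sub_subset h χ (by simp [sub, mem_sub_self])))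
  · exact clC_aux (Or.inl h)
  · subst h; exact clC_aux (Or.inr (Or.inr (Or.inr rfl)))

lemma clC_impl {P : Type} {φ χ1 χ2 : FormC P} (h : FormC.impl χ1 χ2 ∈ clC φ) :
    χ1 ∈ clC φ ∧ χ2 ∈ clC φ := by
  simp [clC, cl, groupsList] at h
  exact ⟨clC_aux (Or.inl (sub_subset h χ1 (by simp [sub, mem_sub_self]))),
    clC_aux (Or.inl (sub_subset h χ2 (by simp [sub, mem_sub_self])))⟩

lemma clC_K {P : Type} {φ χ : FormC P} {i : Bool} (h : FormC.K i χ ∈ clC φ) : χ ∈ clC φ := by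
  simp [clC, cl, groupsList] at h
  exact clC_aux (Or.inl (sub_subset h χ (by simp [sub, mem_sub_self])))

lemma clC_Ck {P : Type} {φ χ : FormC P} {G : Finset Bool} (h : FormC.Ck G χ ∈ clC φ) :
    χ ∈ clC φ := by
  simp [clC, cl, groupsList] at h
  rcases h with h | ⟨h,-⟩ | ⟨a,ha,-,rfl⟩ | ⟨-,rfl⟩ | ⟨-,rfl⟩ | ⟨h,-⟩ | ⟨a,ha,-,rfl⟩ | ⟨-,rfl⟩ | ⟨-,rfl⟩ | ⟨h,-⟩ | ⟨a,ha,-,rfl⟩ | ⟨-,rfl⟩ | ⟨-,rfl⟩ <;>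
    first
      | exact clC_aux (Or.inl (sub_subset h χ (by simp [sub, mem_sub_self])))
      | exact clC_aux (Or.inl h)
      | exact clC_aux (Or.inr (Or.inl ⟨a, ha, rfl⟩))
      | exact clC_aux (Or.inr (Or.inr (Or.inl rfl)))
      | exact clC_aux (Or.inr (Or.inr (Or.inr rfl)))

lemma mem_mu_4 {P : Type} {φ ψ : FormC P} (i : Bool) (h : ψ ∈ clC φ) :
    FormC.impl (.K i ψ) (.K i (.K i ψ)) ∈ mu φ :=
  List.mem_flatMap.mpr ⟨i, by cases i <;> simp,
    List.mem_flatMap.mpr ⟨ψ, h, by simp⟩⟩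

lemma mem_mu_T {P : Type} {φ ψ : FormC P} (i : Bool) (h : ψ ∈ clC φ) :
    FormC.impl (.K i ψ) ψ ∈ mu φ :=
  List.mem_flatMap.mpr ⟨i, by cases i <;> simp,
    List.mem_flatMap.mpr ⟨ψ, h, by simp⟩⟩

lemma mu_valid {W P : Type} {R : Bool → W → W → Prop} {V : W → P → Prop}
    (hR : ∀ i, Reflexive (R i) ∧ Symmetric (R i) ∧ Transitive (R i))
    (φ : FormC P) : ∀ χ ∈ mu φ, ∀ w, ksat R V χ w := by
  intro χ hχ w
  obtain ⟨i, -, hχ⟩ := List.mem_flatMap.mp hχ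
  obtain ⟨ψ, -, hχ⟩ := List.mem_flatMap.mp hχ
  simp at hχ
  obtain rfl | rfl := hχ
  · intro h u hu v hv
    exact h v ((hR i).2.2 hu hv)
  · intro h
    exact h w ((hR i).1 w)

section Main
variable {W P : Type} {R : Bool → W → W → Prop} {V : W → P → Prop} {φ : FormC P} {Wp : W → Prop}

lemma K_prop (hmu : ∀ u, Wp u → ∀ χ ∈ mu φ, ksat R V χ u)
    (hW : ∀ ⦃u v : W⦄ (i : Bool), Wp u → R i u v → Wp v)
    {i : Bool} {ψ : FormC P} {u : W} (hψ : ψ ∈ clC φ) (hu : Wp u)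
    (hK : ksat R V (.K i ψ) u) :
    ∀ v, Relation.ReflTransGen (R i) u v → ksat R V (.K i ψ) v ∧ Wp v := by
  intro v hv
  induction hv with
  | refl => exact ⟨hK, hu⟩
  | tail h step ih =>
    obtain ⟨hKb, hWb⟩ := ih
    exact ⟨hmu _ hWb _ (mem_mu_4 i hψ) hKb _ step, hW i hWb step⟩

lemma transGen_closure_iff {G : Finset Bool} {i0 : Bool} (hi0 : i0 ∈ G) (u v : W) :
    Relation.TransGen (fun x y => ∃ i ∈ G, Relation.ReflTransGen (R i) x y) u v ↔
      Relation.ReflTransGen (fun x y => ∃ i ∈ G, R i x y) u v := by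
  constructor
  · intro h
    induction h with
    | single h =>
      obtain ⟨i, hi, h⟩ := h
      exact Relation.ReflTransGen.mono (fun x y hxy => ⟨i, hi, hxy⟩) _ _ h
    | tail _ h ih =>
      obtain ⟨i, hi, h⟩ := h
      exact ih.trans (Relation.ReflTransGen.mono (fun x y hxy => ⟨i, hi, hxy⟩) _ _ h)
  · intro h
    induction h with
    | refl => exact Relation.TransGen.single ⟨i0, hi0, Relation.ReflTransGen.refl⟩
    | tail _ h ih =>
      obtain ⟨i, hi, h⟩ := h
      exact ih.tail ⟨i, hi, Relation.ReflTransGen.single h⟩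

lemma truth_lemma (hsym : ∀ i, Symmetric (R i))
    (hmu : ∀ u, Wp u → ∀ χ ∈ mu φ, ksat R V χ u)
    (hW : ∀ ⦃u v : W⦄ (i : Bool), Wp u → R i u v → Wp v) :
    ∀ ψ : FormC P, ψ ∈ clC φ → ∀ u, Wp u →
      (ksat R V ψ u ↔ ksat (fun i x y => Relation.ReflTransGen (R i) x y) V ψ u) := by
  have hWrt : ∀ (i : Bool) ⦃u v : W⦄, Wp u → Relation.ReflTransGen (R i) u v → Wp v := by
    intro i u v hu h
    induction h with
    | refl => exact hu
    | tail _ step ih => exact hW i ih step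
  have hWT : ∀ (G : Finset Bool) ⦃u v : W⦄, Wp u →
      Relation.ReflTransGen (fun x y => ∃ i ∈ G, R i x y) u v → Wp v := by
    intro G u v hu h
    induction h with
    | refl => exact hu
    | tail _ step ih => obtain ⟨i, _, step⟩ := step; exact hW i ih step
  intro ψ
  induction ψ with
  | atom p => intro _ u _; simp [ksat]
  | bot => intro _ u _; simp [ksat]
  | neg ψ ih =>
    intro h u hu
    simp only [ksat]
    exact not_congr (ih (clC_neg h) u hu)
  | impl ψ1 ψ2 ih1 ih2 =>
    intro h u hu
    simp only [ksat]
    exact imp_congr (ih1 (clC_impl h).1 u hu) (ih2 (clC_impl h).2 u hu)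
  | K i ψ ih =>
    intro h u hu
    have hψ := clC_K h
    constructor
    · intro hK v hv
      obtain ⟨hKv, hWv⟩ := K_prop hmu hW hψ hu hK v hv
      exact (ih hψ v hWv).mp (hmu v hWv _ (mem_mu_T i hψ) hKv)
    · intro hK v hv
      exact (ih hψ v (hW i hu hv)).mpr (hK v (Relation.ReflTransGen.single hv))
  | Ck G ψ ih =>
    intro h u hu
    have hψ := clC_Ck h
    by_cases hG : ∃ i, i ∈ G
    · obtain ⟨i0, hi0⟩ := hG
      constructor
      · intro hCk v hv
        have hv' : Relation.ReflTransGen (fun x y => ∃ i ∈ G, R i x y) u v :=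
          (transGen_closure_iff hi0 u v).mp hv
        have hWv : Wp v := hWT G hu hv'
        rcases Relation.reflTransGen_iff_eq_or_transGen.mp hv' with rfl | htg
        · by_cases hs : ∃ t, R i0 v t
          · obtain ⟨t, ht⟩ := hs
            have hloop : Relation.TransGen (fun x y => ∃ i ∈ G, R i x y) v v :=
              Relation.TransGen.tail (Relation.TransGen.single ⟨i0, hi0, ht⟩)
                ⟨i0, hi0, hsym i0 ht⟩
            exact (ih hψ v hWv).mp (hCk v hloop)
          · have hK : ksat R V (.K i0 ψ) v := fun t ht => absurd ⟨t, ht⟩ hs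
            exact (ih hψ v hWv).mp (hmu v hWv _ (mem_mu_T i0 hψ) hK)
        · exact (ih hψ v hWv).mp (hCk v htg)
      · intro hCk v hv
        have hWv : Wp v := by
          have : Relation.ReflTransGen (fun x y => ∃ i ∈ G, R i x y) u v := hv.to_reflTransGen
          exact hWT G hu this
        have hv' : Relation.TransGen
            (fun x y => ∃ i ∈ G, Relation.ReflTransGen (R i) x y) u v :=
          Relation.TransGen.mono (fun x y hxy => by
            obtain ⟨i, hi, hxy⟩ := hxy
            exact ⟨i, hi, Relation.ReflTransGen.single hxy⟩) _ _ hv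
        exact (ih hψ v hWv).mpr (hCk v hv')
    · constructor <;> intro _ v hv <;>
        · exfalso
          cases hv with
          | single h => obtain ⟨i, hi, -⟩ := h; exact hG ⟨i, hi⟩
          | tail _ h => obtain ⟨i, hi, -⟩ := h; exact hG ⟨i, hi⟩

end Main

/-- A two-agent formula with common knowledge is satisfiable in S5 Kripke models iff
`ρ(φ)` is satisfiable in symmetric Kripke models. -/
theorem S5_sat_iff_symmetric_sat_of_rewrite (P : Type) (φ : FormC P) :
    (∃ (W : Type) (_ : Nonempty W) (R : Bool → W → W → Prop)
      (_ : ∀ i, Reflexive (R i) ∧ Symmetric (R i) ∧ Transitive (R i))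
      (V : W → P → Prop) (w : W), ksat R V φ w) ↔
    (∃ (W : Type) (_ : Nonempty W) (R : Bool → W → W → Prop)
      (_ : ∀ i, Symmetric (R i))
      (V : W → P → Prop) (w : W), ksat R V (rho φ) w) := by
  constructor
  · rintro ⟨W, hne, R, hR, V, w, hφ⟩
    refine ⟨W, hne, R, fun i => (hR i).2.1, V, w, ?_⟩
    rw [rho, ksat_andF, ksat_andF]
    exact ⟨hφ, (ksat_conj R V _ w).mpr (fun χ hχ => mu_valid hR φ χ hχ w),
      fun u _ => (ksat_conj R V _ u).mpr (fun χ hχ => mu_valid hR φ χ hχ u)⟩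
  · rintro ⟨W, hne, R, hsym, V, w, hρ⟩
    rw [rho, ksat_andF, ksat_andF] at hρ
    obtain ⟨hφ, hμw, hC⟩ := hρ
    set Wp : W → Prop := fun u => u = w ∨
      Relation.TransGen (fun x y => ∃ i ∈ ({false, true} : Finset Bool), R i x y) w u with hWpdef
    have hmu : ∀ u, Wp u → ∀ χ ∈ mu φ, ksat R V χ u := by
      rintro u (rfl | hp) χ hχ
      · exact (ksat_conj R V _ u).mp hμw χ hχ
      · exact (ksat_conj R V _ u).mp (hC u hp) χ hχ
    have hW : ∀ ⦃u v : W⦄ (i : Bool), Wp u → R i u v → Wp v := by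
      rintro u v i (rfl | hp) h
      · exact Or.inr (Relation.TransGen.single ⟨i, by cases i <;> decide, h⟩)
      · exact Or.inr (hp.tail ⟨i, by cases i <;> decide, h⟩)
    refine ⟨W, hne, fun i x y => Relation.ReflTransGen (R i) x y, ?_, V, w, ?_⟩
    · intro i
      exact ⟨fun x => Relation.ReflTransGen.refl,
        fun x y h => (@Relation.ReflTransGen.stdSymm _ (R i) ⟨hsym i⟩).symm x y h,
        fun x y z h1 h2 => h1.trans h2⟩
    · exact (truth_lemma hsym hmu hW φ (self_mem_clC φ) w (Or.inl rfl)).mp hφ
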